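/- Let U have basis (α_i)_{i∈J} with reflections σ_i(v) = v − k_i(v)·α_i where k_i(α_j) = 2δ_{ij}, and let Y have symplectic basis (x_i, y_i)_{i∈J} with maps S_i negating the plane span{x_i, y_i} and fixing the others. Then the map sending σ_i ↦ S_i extends to a group isomorphism between the subgroup of GL(U) generated by {σ_i} and the subgroup of GL(Y) generated by {S_i}. -/

import Mathlib

section Aux

variable {I J V : Type*} [Fintype J] [DecidableEq J] [AddCommGroup V] [Module ℝ V]

/-- Sign generators in `J → ℤˣ`. -/
def deltaSign (i : J) : J → ℤˣ := fun j => if j = i then -1 else 1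

lemma closure_range_deltaSign : Subgroup.closure (Set.range (deltaSign (J := J))) = ⊤ := by
  rw [eq_top_iff]
  intro ε _
  have hε : ε = ∏ i : J, (if ε i = 1 then 1 else deltaSign i) := by
    funext j
    rw [Finset.prod_apply]
    rw [Finset.prod_eq_single j]
    · rcases Int.units_eq_one_or (ε j) with h | h <;> simp [h, deltaSign]
    · intro i _ hij
      rcases Int.units_eq_one_or (ε i) with h | h <;> simp [h, deltaSign, hij.symm]
    · simp
  rw [hε]
  apply Subgroup.prod_mem
  intro i _
  by_cases h : ε i = 1
  · simp [h, one_mem]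
  · simp only [if_neg h]
    exact Subgroup.subset_closure ⟨i, rfl⟩

/-- Linear map scaling each basis vector `b i` by a sign `ε (p i)`. -/
noncomputable def diagLM (b : Module.Basis I ℝ V) (p : I → J) (ε : J → ℤˣ) : V →ₗ[ℝ] V :=
  b.constr ℝ (fun i => ((ε (p i) : ℤ) : ℝ) • b i)

lemma diagLM_basis (b : Module.Basis I ℝ V) (p : I → J) (ε : J → ℤˣ) (i : I) :
    diagLM b p ε (b i) = ((ε (p i) : ℤ) : ℝ) • b i :=
  b.constr_basis ℝ _ i

lemma diagLM_one (b : Module.Basis I ℝ V) (p : I → J) : diagLM b p 1 = LinearMap.id := by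
  apply b.ext; intro i; simp [diagLM_basis]

lemma diagLM_mul (b : Module.Basis I ℝ V) (p : I → J) (ε ε' : J → ℤˣ) :
    (diagLM b p ε).comp (diagLM b p ε') = diagLM b p (ε * ε') := by
  apply b.ext; intro i
  simp only [LinearMap.comp_apply, diagLM_basis, map_smul, smul_smul]
  rw [Pi.mul_apply]
  push_cast
  ring_nf

/-- Monoid hom from signs to linear automorphisms. -/
noncomputable def diagHom (b : Module.Basis I ℝ V) (p : I → J) : (J → ℤˣ) →* (V ≃ₗ[ℝ] V) where
  toFun ε := LinearEquiv.ofLinear (diagLM b p ε) (diagLM b p ε⁻¹)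
    (by rw [diagLM_mul, mul_inv_cancel, diagLM_one])
    (by rw [diagLM_mul, inv_mul_cancel, diagLM_one])
  map_one' := by
    apply LinearEquiv.toLinearMap_injective
    simp [diagLM_one]
  map_mul' ε ε' := by
    apply LinearEquiv.toLinearMap_injective
    exact (diagLM_mul b p ε ε').symm

lemma diagHom_apply (b : Module.Basis I ℝ V) (p : I → J) (ε : J → ℤˣ) (i : I) :
    diagHom b p ε (b i) = ((ε (p i) : ℤ) : ℝ) • b i :=
  diagLM_basis b p ε i

lemma diagHom_injective (b : Module.Basis I ℝ V) (p : I → J) (hp : Function.Surjective p) :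
    Function.Injective (diagHom b p) := by
  intro ε ε' h
  funext j
  obtain ⟨i, rfl⟩ := hp j
  have h2 : diagHom b p ε (b i) = diagHom b p ε' (b i) := by rw [h]
  rw [diagHom_apply, diagHom_apply] at h2
  have h3 : ((ε (p i) : ℤ) : ℝ) = ((ε' (p i) : ℤ) : ℝ) := by
    have := smul_left_injective ℝ (b.ne_zero i) h2
    exact this
  exact Units.ext (by exact_mod_cast h3)

lemma closure_eq_range (b : Module.Basis I ℝ V) (p : I → J) (g : J → V ≃ₗ[ℝ] V)
    (hg : ∀ i, diagHom b p (deltaSign i) = g i) :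
    Subgroup.closure (Set.range g) = (diagHom b p).range := by
  have : Set.range g = (diagHom b p) '' Set.range deltaSign := by
    ext x
    constructor
    · rintro ⟨i, rfl⟩; exact ⟨deltaSign i, ⟨i, rfl⟩, hg i⟩
    · rintro ⟨_, ⟨i, rfl⟩, rfl⟩; exact ⟨i, (hg i).symm⟩
  rw [this, ← MonoidHom.map_closure, closure_range_deltaSign,
    ← MonoidHom.range_eq_map]

end Aux

set_option maxHeartbeats 800000 in
theorem weyl_group_iso_symplectic_model
    (U : Type*) [AddCommGroup U] [Module ℝ U]
    (Y : Type*) [AddCommGroup Y] [Module ℝ Y]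
    (J : Type*) [Fintype J] [DecidableEq J]
    (bU : Module.Basis J ℝ U)
    (k : J → U →ₗ[ℝ] ℝ) (hk : ∀ i j, k i (bU j) = if j = i then 2 else 0)
    (σ : J → U ≃ₗ[ℝ] U) (hσ : ∀ i v, σ i v = v - k i v • bU i)
    (bY : Module.Basis (J ⊕ J) ℝ Y)
    (S : J → Y ≃ₗ[ℝ] Y)
    (hSx : ∀ i j, S i (bY (Sum.inl j)) = if j = i then -bY (Sum.inl j) else bY (Sum.inl j))
    (hSy : ∀ i j, S i (bY (Sum.inr j)) = if j = i then -bY (Sum.inr j) else bY (Sum.inr j)) :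
    ∃ e : Subgroup.closure (Set.range σ) ≃* Subgroup.closure (Set.range S),
      ∀ i, (e ⟨σ i, Subgroup.subset_closure ⟨i, rfl⟩⟩ : Y ≃ₗ[ℝ] Y) = S i := by
  have hgU : ∀ i, diagHom bU (id : J → J) (deltaSign i) = σ i := by
    intro i
    apply LinearEquiv.toLinearMap_injective
    apply bU.ext
    intro j
    simp only [LinearEquiv.coe_coe, diagHom_apply, hσ, hk, deltaSign, id]
    by_cases h : j = i
    · subst h
      norm_num
      module
    · simp [h]
  have hgY : ∀ i, diagHom bY (Sum.elim id id : J ⊕ J → J) (deltaSign i) = S i := by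
    intro i
    apply LinearEquiv.toLinearMap_injective
    apply bY.ext
    intro j
    rcases j with j | j <;>
      simp only [LinearEquiv.coe_coe, diagHom_apply, hSx, hSy, deltaSign, Sum.elim_inl,
        Sum.elim_inr, id] <;>
      by_cases h : j = i <;> simp [h]
  set ΦU := diagHom bU (id : J → J) with hΦU
  set ΦY := diagHom bY (Sum.elim id id : J ⊕ J → J) with hΦY
  have injU : Function.Injective ΦU := diagHom_injective bU id Function.surjective_id
  have injY : Function.Injective ΦY :=
    diagHom_injective bY (Sum.elim id id) (fun j => ⟨Sum.inl j, rfl⟩)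
  have hU : Subgroup.closure (Set.range σ) = ΦU.range := closure_eq_range bU id σ hgU
  have hY : Subgroup.closure (Set.range S) = ΦY.range := closure_eq_range bY _ S hgY
  refine ⟨(MulEquiv.subgroupCongr hU).trans ((MonoidHom.ofInjective injU).symm.trans
    ((MonoidHom.ofInjective injY).trans (MulEquiv.subgroupCongr hY.symm))), ?_⟩
  intro i
  have h1 : (MulEquiv.subgroupCongr hU) ⟨σ i, Subgroup.subset_closure ⟨i, rfl⟩⟩
      = MonoidHom.ofInjective injU (deltaSign i) := by
    apply Subtype.ext
    rw [MonoidHom.ofInjective_apply, hgU i]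
    rfl
  simp only [MulEquiv.trans_apply, h1, MulEquiv.symm_apply_apply]
  have h2 : (MonoidHom.ofInjective injY (deltaSign i) : Y ≃ₗ[ℝ] Y) = S i := by
    rw [MonoidHom.ofInjective_apply]; exact hgY i
  rw [← h2]
  rfl
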